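/- Fix an integer r ≥ 2 and α > 1. Define h(x) := r⁻¹(α(1-r⁻¹)+x)^r, H(x) := 1 - x + x log x for x > 0 with H(0) = 1, and J(x) := (r/(r-1)) h(x) H(x/h(x)) for x ≥ 0. Then J admits a unique point of minimum x₀ ∈ (0,∞) on [0,∞), and J(x₀) > 0. -/

import Mathlib

open Real Set


lemma key_lt (r : ℕ) (hr : 2 ≤ r) (c : ℝ) (hc : (r:ℝ) - 1 < r * c) {x : ℝ} (hx : 0 ≤ x) :
    (r:ℝ) * x < (c + x)^r := by
  have hr2 : (2:ℝ) ≤ (r:ℝ) := by exact_mod_cast hr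
  have hcpos : 0 < c := by nlinarith
  have h1 : (1:ℝ) + r * (c + x - 1) ≤ (1 + (c + x - 1))^r :=
    one_add_mul_le_pow (by nlinarith) r
  have h2 : (1:ℝ) + (c + x - 1) = c + x := by ring
  rw [h2] at h1
  nlinarith

lemma H_pos {y : ℝ} (h0 : 0 ≤ y) (h1 : y < 1) : 0 < 1 - y + y * Real.log y := by
  rcases eq_or_lt_of_le h0 with h | h
  · simp [← h]
  · have hlog : Real.log y < 0 := Real.log_neg h h1
    have h2 : -Real.log y + 1 < Real.exp (-Real.log y) := Real.add_one_lt_exp (by linarith)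
    rw [Real.exp_neg, Real.exp_log h] at h2
    have h3 := mul_lt_mul_of_pos_left h2 h
    rw [mul_inv_cancel₀ h.ne'] at h3
    nlinarith

lemma hasDerivAt_G (r : ℕ) (hr : 2 ≤ r) (c x : ℝ) (hc : 0 < c) (hx : 0 < x) :
    HasDerivAt (fun x => (c+x)^r/(r:ℝ) - x + x * (Real.log r + Real.log x - (r:ℝ) * Real.log (c+x)))
      ((c+x)^(r-1) - (r:ℝ)*x/(c+x) + (Real.log r + Real.log x - (r:ℝ) * Real.log (c+x))) x := by
  have ha : 0 < c + x := by linarith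
  have hrR : (0:ℝ) < (r:ℝ) := by positivity
  have h1 : HasDerivAt (fun x : ℝ => (c+x)^r/(r:ℝ)) ((c+x)^(r-1)) x := by
    have h := (((hasDerivAt_id x).const_add c).pow r).div_const (r:ℝ)
    refine h.congr_deriv ?_
    simp only [id]
    field_simp
  have l2 : HasDerivAt (fun x : ℝ => Real.log (c+x)) (c+x)⁻¹ x := by
    have := ((hasDerivAt_id x).const_add c).log ha.ne'
    simpa using this
  have hL : HasDerivAt (fun x : ℝ => Real.log r + Real.log x - (r:ℝ) * Real.log (c+x))
      (x⁻¹ - (r:ℝ) * (c+x)⁻¹) x :=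
    ((Real.hasDerivAt_log hx.ne').const_add (Real.log r)).sub (l2.const_mul (r:ℝ))
  have h3 := (hasDerivAt_id x).mul hL
  have h4 := (h1.sub (hasDerivAt_id x)).add h3
  refine h4.congr_deriv ?_
  simp only [id]
  field_simp
  ring

lemma hasDerivAt_D (r : ℕ) (hr : 2 ≤ r) (c x : ℝ) (hc : 0 < c) (hx : 0 < x) :
    HasDerivAt (fun x => (c+x)^(r-1) - (r:ℝ)*x/(c+x) + (Real.log r + Real.log x - (r:ℝ) * Real.log (c+x)))
      (((r:ℝ)-1)*(c+x)^(r-2) - (r:ℝ)*c/(c+x)^2 + (x⁻¹ - (r:ℝ)*(c+x)⁻¹)) x := by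
  have ha : 0 < c + x := by linarith
  have h1 : HasDerivAt (fun x : ℝ => (c+x)^(r-1)) (((r:ℝ)-1)*(c+x)^(r-2)) x := by
    have h := ((hasDerivAt_id x).const_add c).pow (r-1)
    refine h.congr_deriv ?_
    have e1 : ((r - 1 : ℕ) : ℝ) = (r:ℝ) - 1 := by
      have : (1:ℕ) ≤ r := by omega
      push_cast [Nat.cast_sub this]; ring
    have e2 : r - 1 - 1 = r - 2 := by omega
    rw [e1, e2]; simp only [id]; ring
  have h2 : HasDerivAt (fun x : ℝ => (r:ℝ)*x/(c+x)) ((r:ℝ)*c/(c+x)^2) x := by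
    have hnum : HasDerivAt (fun x : ℝ => (r:ℝ)*x) (r:ℝ) x := by
      simpa using (hasDerivAt_id x).const_mul (r:ℝ)
    have hden : HasDerivAt (fun x : ℝ => c + x) 1 x := (hasDerivAt_id x).const_add c
    have h := hnum.div hden ha.ne'
    refine h.congr_deriv ?_
    field_simp
    ring
  have l2 : HasDerivAt (fun x : ℝ => Real.log (c+x)) (c+x)⁻¹ x := by
    have := ((hasDerivAt_id x).const_add c).log ha.ne'
    simpa using this
  have hL : HasDerivAt (fun x : ℝ => Real.log r + Real.log x - (r:ℝ) * Real.log (c+x))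
      (x⁻¹ - (r:ℝ) * (c+x)⁻¹) x :=
    ((Real.hasDerivAt_log hx.ne').const_add (Real.log r)).sub (l2.const_mul (r:ℝ))
  exact (h1.sub h2).add hL

lemma E_pos (r : ℕ) (hr : 2 ≤ r) (c x : ℝ) (hc : (r:ℝ) - 1 < r * c) (hx : 0 < x) :
    0 < ((r:ℝ)-1)*(c+x)^(r-2) - (r:ℝ)*c/(c+x)^2 + (x⁻¹ - (r:ℝ)*(c+x)⁻¹) := by
  have hr2 : (2:ℝ) ≤ (r:ℝ) := by exact_mod_cast hr
  have hcpos : 0 < c := by nlinarith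
  have ha : 0 < c + x := by linarith
  have hkey : (r:ℝ) * x < (c+x)^r := key_lt r hr c hc hx.le
  push_cast at hkey
  obtain ⟨s, rfl⟩ : ∃ s, r = s + 2 := ⟨r - 2, by omega⟩
  have e2 : s + 2 - 2 = s := by omega
  have e3 : ((s+2 : ℕ) : ℝ) = (s:ℝ) + 2 := by push_cast; ring
  rw [e2, e3] at *
  push_cast at hkey ⊢
  have hrw : ((s:ℝ)+2-1)*(c+x)^s - ((s:ℝ)+2)*c/(c+x)^2 + (x⁻¹ - ((s:ℝ)+2)*(c+x)⁻¹)
      = ((s:ℝ)+1)*(c+x)^s*(1 - ((s:ℝ)+2)*x/(c+x)^(s+2)) + (c-((s:ℝ)+1)*x)^2/(x*(c+x)^2) := by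
    have hps : (c+x)^(s+2) = (c+x)^s * (c+x)^2 := by rw [pow_add]
    rw [hps]
    field_simp
    ring
  rw [hrw]
  have t1 : 0 < ((s:ℝ)+1)*(c+x)^s*(1 - ((s:ℝ)+2)*x/(c+x)^(s+2)) := by
    have hp : (0:ℝ) < (c+x)^(s+2) := by positivity
    have : ((s:ℝ)+2)*x/(c+x)^(s+2) < 1 := (div_lt_one hp).mpr hkey
    have hsp : (0:ℝ) < ((s:ℝ)+1)*(c+x)^s := by positivity
    nlinarith
  have t2 : 0 ≤ (c-((s:ℝ)+1)*x)^2/(x*(c+x)^2) := by positivity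
  linarith






theorem aux_min (r : ℕ) (hr : 2 ≤ r) (c : ℝ) (hc : (r:ℝ) - 1 < r * c) :
    ∃ x₀ : ℝ, 0 < x₀ ∧
      IsMinOn (fun x => ((r:ℝ)/((r:ℝ)-1)) *
        ((c+x)^r/(r:ℝ) - x + x * (Real.log r + Real.log x - (r:ℝ) * Real.log (c+x)))) (Set.Ici 0) x₀ ∧
      ∀ y ∈ Set.Ici (0:ℝ), IsMinOn (fun x => ((r:ℝ)/((r:ℝ)-1)) *
        ((c+x)^r/(r:ℝ) - x + x * (Real.log r + Real.log x - (r:ℝ) * Real.log (c+x)))) (Set.Ici 0) y → y = x₀ := by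
  have hr2 : (2:ℝ) ≤ (r:ℝ) := by exact_mod_cast hr
  have hcpos : 0 < c := by nlinarith
  set C : ℝ := (r:ℝ)/((r:ℝ)-1) with hCdef
  have hC : 0 < C := div_pos (by linarith) (by linarith)
  set F : ℝ → ℝ := fun x => C *
    ((c+x)^r/(r:ℝ) - x + x * (Real.log r + Real.log x - (r:ℝ) * Real.log (c+x))) with hFdef
  set D : ℝ → ℝ := fun x => C *
    ((c+x)^(r-1) - (r:ℝ)*x/(c+x) + (Real.log r + Real.log x - (r:ℝ) * Real.log (c+x))) with hDdef
  have hder : ∀ x : ℝ, 0 < x → HasDerivAt F (D x) x := fun x hx =>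
    (hasDerivAt_G r hr c x hcpos hx).const_mul C
  have hderD : ∀ x : ℝ, 0 < x → HasDerivAt D
      (C * (((r:ℝ)-1)*(c+x)^(r-2) - (r:ℝ)*c/(c+x)^2 + (x⁻¹ - (r:ℝ)*(c+x)⁻¹))) x := fun x hx =>
    (hasDerivAt_D r hr c x hcpos hx).const_mul C
  -- continuity of F on Ici 0
  have hcont : ContinuousOn F (Set.Ici 0) := by
    have heq : Set.EqOn F (fun x => C * ((c+x)^r/(r:ℝ)) - C * x + C * Real.log r * x
        + C * (x * Real.log x) - C * (r:ℝ) * (x * Real.log (c+x))) (Set.Ici 0) := by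
      intro x _; simp only [hFdef]; ring
    apply ContinuousOn.congr ?_ heq
    have c1 : ContinuousOn (fun x : ℝ => x * Real.log (c+x)) (Set.Ici 0) := by
      apply continuousOn_id.mul
      apply ContinuousOn.log (by fun_prop)
      intro x hx
      have : (0:ℝ) ≤ x := hx
      positivity
    fun_prop
  -- D is strictly monotone on Ioi 0
  have hDmono : StrictMonoOn D (Set.Ioi 0) := by
    apply strictMonoOn_of_deriv_pos (convex_Ioi 0)
    · exact fun x hx => ((hderD x hx).differentiableAt.continuousAt).continuousWithinAt
    · intro x hx
      rw [interior_Ioi] at hx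
      rw [(hderD x hx).deriv]
      exact mul_pos hC (E_pos r hr c x hc hx)
  -- F is strictly convex on Ici 0
  have hconv : StrictConvexOn ℝ (Set.Ici 0) F := by
    apply StrictMonoOn.strictConvexOn_of_deriv (convex_Ici 0) hcont
    rw [interior_Ici]
    intro a ha b hb hab
    rw [(hder a ha).deriv, (hder b hb).deriv]
    exact hDmono ha hb hab
  -- D is positive for large x
  set M : ℝ := 9*(r:ℝ)^2 + c + 1 with hMdef
  have hM1 : (1:ℝ) ≤ M := by nlinarith
  have hMpos : (0:ℝ) < M := by linarith
  have hDposM : ∀ x : ℝ, M ≤ x → 0 < D x := by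
    intro x hx
    have hx1 : (1:ℝ) ≤ x := le_trans hM1 hx
    have ha : 0 < c + x := by linarith
    have ha1 : (1:ℝ) ≤ c + x := by linarith
    have hsq9 : 9*(r:ℝ)^2 < c + x := by nlinarith
    have hsqrt : 3*(r:ℝ) < Real.sqrt (c+x) := by
      rw [show (3*(r:ℝ)) = Real.sqrt ((3*(r:ℝ))^2) from (Real.sqrt_sq (by positivity)).symm]
      apply Real.sqrt_lt_sqrt (by positivity)
      nlinarith
    have hmulself : Real.sqrt (c+x) * Real.sqrt (c+x) = c + x := Real.mul_self_sqrt ha.le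
    have hloga : Real.log (c+x) ≤ 2*(Real.sqrt (c+x) - 1) := by
      have h1 : Real.log (Real.sqrt (c+x)) ≤ Real.sqrt (c+x) - 1 :=
        Real.log_le_sub_one_of_pos (Real.sqrt_pos.mpr ha)
      have h2 : Real.log (Real.sqrt (c+x)) = Real.log (c+x) / 2 := Real.log_sqrt ha.le
      linarith
    have hpow : c + x ≤ (c+x)^(r-1) := le_self_pow₀ ha1 (by omega)
    have hdiv : (r:ℝ)*x/(c+x) < (r:ℝ) := by
      rw [div_lt_iff₀ ha]; nlinarith
    have hlogr : 0 < Real.log r := Real.log_pos (by exact_mod_cast lt_of_lt_of_le one_lt_two hr)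
    have hlogx : 0 ≤ Real.log x := Real.log_nonneg hx1
    have hsqrt1 : (1:ℝ) ≤ Real.sqrt (c+x) := by nlinarith
    have hbig : 0 < (c+x)^(r-1) - (r:ℝ)*x/(c+x) + (Real.log r + Real.log x - (r:ℝ) * Real.log (c+x)) := by
      nlinarith [mul_le_mul_of_nonneg_left hloga (by positivity : (0:ℝ) ≤ (r:ℝ))]
    exact mul_pos hC hbig
  -- F strictly monotone on Ici M
  have hFM : StrictMonoOn F (Set.Ici M) := by
    apply strictMonoOn_of_deriv_pos (convex_Ici M) (hcont.mono (Set.Ici_subset_Ici.mpr hMpos.le))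
    intro x hx
    rw [interior_Ici] at hx
    rw [(hder x (lt_trans hMpos hx)).deriv]
    exact hDposM x hx.le
  -- existence of min on [0, M]
  obtain ⟨x₀, hx₀mem, hx₀min⟩ := (isCompact_Icc (a := (0:ℝ)) (b := M)).exists_isMinOn
    ⟨0, by simp [hMpos.le]⟩ (hcont.mono Set.Icc_subset_Ici_self)
  have hminIci : IsMinOn F (Set.Ici 0) x₀ := by
    rw [isMinOn_iff]
    intro y hy
    rcases le_or_gt y M with hyM | hyM
    · exact isMinOn_iff.mp hx₀min y ⟨hy, hyM⟩
    · have h1 : F x₀ ≤ F M := isMinOn_iff.mp hx₀min M ⟨hMpos.le, le_refl M⟩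
      have h2 : F M < F y := hFM (Set.self_mem_Ici) (le_of_lt hyM) hyM
      linarith
  -- there is a point with F < F 0, hence x₀ > 0
  set K : ℝ := (c+1)^(r-1) + Real.log r - (r:ℝ)*Real.log c with hKdef
  set ε : ℝ := min 1 (Real.exp (-(|K|+1))) with hεdef
  have hεpos : 0 < ε := lt_min one_pos (Real.exp_pos _)
  have hε1 : ε ≤ 1 := min_le_left _ _
  have hDneg : ∀ t : ℝ, 0 < t → t < ε → D t < 0 := by
    intro t ht htε
    have ht1 : t ≤ 1 := le_of_lt (lt_of_lt_of_le htε hε1)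
    have ha : 0 < c + t := by linarith
    have hac : c < c + t := by linarith
    have hpowle : (c+t)^(r-1) ≤ (c+1)^(r-1) := by
      apply pow_le_pow_left₀ ha.le; linarith
    have hlogc : Real.log c < Real.log (c+t) := Real.log_lt_log hcpos hac
    have hlogt : Real.log t < -(|K|+1) := by
      have : t < Real.exp (-(|K|+1)) := lt_of_lt_of_le htε (min_le_right _ _)
      calc Real.log t < Real.log (Real.exp (-(|K|+1))) := Real.log_lt_log ht this
        _ = -(|K|+1) := Real.log_exp _
    have hdiv : 0 < (r:ℝ)*t/(c+t) := by positivity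
    have habs : K ≤ |K| := le_abs_self K
    have hbr : (c+t)^(r-1) - (r:ℝ)*t/(c+t) + (Real.log r + Real.log t - (r:ℝ) * Real.log (c+t)) < 0 := by
      have hrlog : (r:ℝ)*Real.log c ≤ (r:ℝ)*Real.log (c+t) :=
        mul_le_mul_of_nonneg_left hlogc.le (by positivity)
      have : (c+t)^(r-1) - (r:ℝ)*t/(c+t) + (Real.log r + Real.log t - (r:ℝ) * Real.log (c+t))
          ≤ (c+1)^(r-1) + Real.log r + Real.log t - (r:ℝ)*Real.log c := by linarith
      have hKK : (c+1)^(r-1) + Real.log r - (r:ℝ)*Real.log c = K := hKdef.symm ▸ rfl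
      linarith
    calc D t = C * ((c+t)^(r-1) - (r:ℝ)*t/(c+t) + (Real.log r + Real.log t - (r:ℝ) * Real.log (c+t))) := rfl
      _ < 0 := mul_neg_of_pos_of_neg hC hbr
  have hFε : F ε < F 0 := by
    obtain ⟨ξ, hξmem, hξ⟩ := exists_hasDerivAt_eq_slope F D hεpos
      (hcont.mono (by intro z hz; exact hz.1))
      (fun t ht => hder t ht.1)
    have hDξ : D ξ < 0 := hDneg ξ hξmem.1 hξmem.2
    rw [hξ] at hDξ
    have := (div_neg_iff).mp hDξ
    rcases this with ⟨h1, h2⟩ | ⟨h1, h2⟩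
    · linarith
    · simp at h2; linarith
  have hx₀pos : 0 < x₀ := by
    rcases lt_or_eq_of_le hx₀mem.1 with h | h
    · exact h
    · exfalso
      have h1 : F x₀ ≤ F ε := isMinOn_iff.mp hminIci ε hεpos.le
      rw [h] at hFε
      linarith
  refine ⟨x₀, hx₀pos, hminIci, ?_⟩
  intro y hy hymin
  exact hconv.eq_of_isMinOn hymin hminIci hy (Set.mem_Ici.mpr (le_of_lt hx₀pos))





/-- `J` admits a unique minimum point `x₀ ∈ (0,∞)` on `[0,∞)`,
and `J x₀ > 0`. Here `h x = r⁻¹ (α(1-r⁻¹)+x)^r` and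
`J x = (r/(r-1)) h(x) H(x/h(x))` with `H y = 1 - y + y log y`
(note `Real.log 0 = 0`, so the formula also gives `H 0 = 1`). -/
theorem stmt_3 (r : ℕ) (hr : 2 ≤ r) (α : ℝ) (hα : 1 < α) (h J : ℝ → ℝ)
    (hh : ∀ x : ℝ, h x = (r : ℝ)⁻¹ * (α * (1 - (r : ℝ)⁻¹) + x) ^ r)
    (hJ : ∀ x : ℝ, J x = ((r : ℝ) / ((r : ℝ) - 1)) * h x *
      (1 - x / h x + (x / h x) * Real.log (x / h x))) :
    ∃ x₀ : ℝ, 0 < x₀ ∧ IsMinOn J (Set.Ici 0) x₀ ∧ 0 < J x₀ ∧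
      ∀ y ∈ Set.Ici (0 : ℝ), IsMinOn J (Set.Ici 0) y → y = x₀ := by
  have hr2 : (2:ℝ) ≤ (r:ℝ) := by exact_mod_cast hr
  have hrpos : (0:ℝ) < (r:ℝ) := by linarith
  have hrne : (r:ℝ) ≠ 0 := hrpos.ne'
  set c : ℝ := α * (1 - (r:ℝ)⁻¹) with hcdef
  have hrc : (r:ℝ) * c = α * ((r:ℝ) - 1) := by
    rw [hcdef]; field_simp
  have hc : (r:ℝ) - 1 < (r:ℝ) * c := by rw [hrc]; nlinarith
  have hcpos : 0 < c := by nlinarith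
  have hhx : ∀ x : ℝ, h x = (c + x)^r / (r:ℝ) := by
    intro x; rw [hh x, inv_mul_eq_div]
  have hhpos : ∀ x : ℝ, 0 ≤ x → 0 < h x := by
    intro x hx
    rw [hhx x]
    have : 0 < c + x := by linarith
    positivity
  have hkey : ∀ x : ℝ, 0 ≤ x → x < h x := by
    intro x hx
    rw [hhx x, lt_div_iff₀ hrpos]
    have := key_lt r hr c hc hx
    linarith [this]
  have hJpos : ∀ x : ℝ, 0 ≤ x → 0 < J x := by
    intro x hx
    rw [hJ x]
    have hp := hhpos x hx
    have hy0 : 0 ≤ x / h x := div_nonneg hx hp.le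
    have hy1 : x / h x < 1 := (div_lt_one hp).mpr (hkey x hx)
    have hC : 0 < (r:ℝ) / ((r:ℝ) - 1) := div_pos hrpos (by linarith)
    exact mul_pos (mul_pos hC hp) (H_pos hy0 hy1)
  set F : ℝ → ℝ := fun x => ((r:ℝ)/((r:ℝ)-1)) *
    ((c+x)^r/(r:ℝ) - x + x * (Real.log r + Real.log x - (r:ℝ) * Real.log (c+x))) with hFdef
  have hEq : ∀ x : ℝ, 0 ≤ x → J x = F x := by
    intro x hx
    rcases eq_or_lt_of_le hx with hx0 | hx0
    · rw [← hx0, hJ 0, hhx 0]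
      simp only [hFdef, zero_div, mul_zero, zero_mul, sub_zero, add_zero, mul_one]
    · have ha : 0 < c + x := by linarith
      have hp := hhpos x hx
      have hpr : (0:ℝ) < (c+x)^r := by positivity
      have hlog : Real.log (x / h x) = Real.log x + Real.log r - (r:ℝ) * Real.log (c+x) := by
        rw [hhx x, div_div_eq_mul_div, Real.log_div (by positivity) hpr.ne',
          Real.log_mul hx0.ne' hrne, Real.log_pow]
      have hne : (c+x)^r / (r:ℝ) ≠ 0 := by positivity
      have hne1 : (r:ℝ) - 1 ≠ 0 := by linarith
      have gen : ∀ A L : ℝ, A ≠ 0 → ((r:ℝ)/((r:ℝ)-1)) * A * (1 - x/A + x/A * L)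
          = ((r:ℝ)/((r:ℝ)-1)) * (A - x + x*L) := by
        intro A L hA
        field_simp
      rw [hJ x, hlog, hhx x]
      simp only [hFdef]
      rw [gen _ _ hne]
      ring
  obtain ⟨x₀, hx₀pos, hmin, huniq⟩ := aux_min r hr c hc
  refine ⟨x₀, hx₀pos, ?_, hJpos x₀ hx₀pos.le, ?_⟩
  · rw [isMinOn_iff]
    intro y hy
    rw [hEq x₀ hx₀pos.le, hEq y hy]
    exact isMinOn_iff.mp hmin y hy
  · intro y hy hymin
    apply huniq y hy
    rw [isMinOn_iff]
    intro z hz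
    show F y ≤ F z
    rw [← hEq y hy, ← hEq z hz]
    exact isMinOn_iff.mp hymin z hz
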